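/- Quantitative Harnack implies connectedness: let D ⊂ ℝ^m be open, non-empty, with |D| < ∞, and suppose its Neumann heat kernel satisfies sup_{x,y∈D} |π_D(x,y;t) − 1/|D|| ≤ c₁ e^{−c₂ t} for all t ≥ t₁, with c₁ < ∞, c₂ > 0. Then D is connected. -/

import Mathlib

open MeasureTheory

/-- quantitative Harnack implies connectedness. Let `D ⊆ ℝ^m` be
open, nonempty, of finite measure, and let `π` be its Neumann heat kernel:
it conserves mass and heat started in a connected component stays in that
component. If `sup_{x,y∈D} |π(x,y;t) − 1/|D|| ≤ c₁ e^{−c₂t}` for `t ≥ t₁` with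
`c₂ > 0`, then `D` is connected. -/
theorem harnack_implies_connected
    {m : ℕ} (D : Set (EuclideanSpace ℝ (Fin m)))
    (hD : IsOpen D) (hne : D.Nonempty) (hDfin : volume D < ⊤)
    (π : EuclideanSpace ℝ (Fin m) → EuclideanSpace ℝ (Fin m) → ℝ → ℝ)
    (hnonneg : ∀ x ∈ D, ∀ y ∈ D, ∀ t > (0 : ℝ), 0 ≤ π x y t)
    (hmeas : ∀ x ∈ D, ∀ t > (0 : ℝ), Measurable (fun y => π x y t))
    (hcons : ∀ x ∈ D, ∀ t > (0 : ℝ), ∫ y in D, π x y t = 1)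
    (hloc : ∀ x ∈ D, ∀ t > (0 : ℝ),
      ∫ y in connectedComponentIn D x, π x y t = 1)
    (t₁ c₁ c₂ : ℝ) (ht₁ : 0 < t₁) (hc₂ : 0 < c₂)
    (hest : ∀ t, t₁ ≤ t → ∀ x ∈ D, ∀ y ∈ D,
      |π x y t - 1 / (volume D).toReal| ≤ c₁ * Real.exp (-c₂ * t)) :
    IsConnected D := by
  obtain ⟨x, hx⟩ := hne
  set C := connectedComponentIn D x with hCdef
  have hCsub : C ⊆ D := connectedComponentIn_subset D x
  have hVpos : (0:ℝ) < (volume D).toReal :=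
    ENNReal.toReal_pos (hD.measure_pos volume ⟨x, hx⟩).ne' hDfin.ne
  set V := (volume D).toReal with hV
  -- choose a large time t
  have htend : Filter.Tendsto (fun t : ℝ => c₁ * Real.exp (-c₂ * t))
      Filter.atTop (nhds 0) := by
    have h1 : Filter.Tendsto (fun t : ℝ => c₂ * t) Filter.atTop Filter.atTop :=
      Filter.Tendsto.const_mul_atTop hc₂ Filter.tendsto_id
    have h2 : Filter.Tendsto (fun t : ℝ => Real.exp (-(c₂ * t)))
        Filter.atTop (nhds 0) := Real.tendsto_exp_neg_atTop_nhds_zero.comp h1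
    have := h2.const_mul c₁
    simpa [neg_mul] using this
  have hev : ∀ᶠ t in Filter.atTop,
      c₁ * Real.exp (-c₂ * t) < 1 / V ∧ t₁ ≤ t := by
    refine (htend.eventually_lt_const (by positivity)).and
      (Filter.eventually_ge_atTop t₁)
  obtain ⟨t, hlt, htt₁⟩ := hev.exists
  have ht0 : (0:ℝ) < t := lt_of_lt_of_le ht₁ htt₁
  set δ : ℝ := 1 / V - c₁ * Real.exp (-c₂ * t) with hδ
  have hδpos : 0 < δ := sub_pos.mpr hlt
  -- pointwise lower bound on D
  have hlow : ∀ y ∈ D, δ ≤ π x y t := by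
    intro y hy
    have := hest t htt₁ x hx y hy
    have := abs_le.mp this
    simp only [hδ]
    linarith [this.1]
  -- integrability on D
  have hint : IntegrableOn (fun y => π x y t) D volume := by
    refine Integrable.mono' (g := fun _ => 1 / V + c₁ * Real.exp (-c₂ * t))
      (integrableOn_const hDfin.ne)
      ((hmeas x hx t ht0).aestronglyMeasurable) ?_
    filter_upwards [ae_restrict_mem hD.measurableSet] with y hy
    have h1 := (abs_le.mp (hest t htt₁ x hx y hy)).2
    have h2 := hnonneg x hx y hy t ht0
    rw [Real.norm_eq_abs, abs_of_nonneg h2]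
    linarith
  -- D \ C is empty
  have hSempty : D \ C = ∅ := by
    by_contra hS
    obtain ⟨z, hz⟩ := Set.nonempty_iff_ne_empty.mpr hS
    -- D \ C is open
    have hSopen : IsOpen (D \ C) := by
      rw [isOpen_iff_forall_mem_open]
      intro w hw
      refine ⟨connectedComponentIn D w, ?_, hD.connectedComponentIn,
        mem_connectedComponentIn hw.1⟩
      intro u hu
      refine ⟨connectedComponentIn_subset D w hu, fun huC => hw.2 ?_⟩
      have h1 : connectedComponentIn D w = connectedComponentIn D u :=
        connectedComponentIn_eq hu
      have h2 : connectedComponentIn D x = connectedComponentIn D u :=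
        connectedComponentIn_eq (hCdef ▸ huC)
      have : w ∈ connectedComponentIn D w := mem_connectedComponentIn hw.1
      rw [h1, ← h2, ← hCdef] at this
      exact this
    have hSvol : 0 < volume (D \ C) := hSopen.measure_pos volume ⟨z, hz⟩
    have hSfin : volume (D \ C) ≠ ⊤ :=
      (lt_of_le_of_lt (measure_mono Set.diff_subset) hDfin).ne
    have hCmeas : MeasurableSet C := (hD.connectedComponentIn).measurableSet
    have hSmeas : MeasurableSet (D \ C) := hSopen.measurableSet
    -- split the integral
    have hunion : C ∪ (D \ C) = D := Set.union_diff_cancel hCsub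
    have hsplit : ∫ y in C ∪ (D \ C), π x y t
        = (∫ y in C, π x y t) + ∫ y in D \ C, π x y t :=
      setIntegral_union Set.disjoint_sdiff_right hSmeas
        (hint.mono_set hCsub) (hint.mono_set Set.diff_subset)
    rw [hunion, hcons x hx t ht0] at hsplit
    have hC1 : ∫ y in C, π x y t = 1 := by rw [hCdef]; exact hloc x hx t ht0
    have hzero : ∫ y in D \ C, π x y t = 0 := by linarith
    have hge : δ * (volume (D \ C)).toReal ≤ ∫ y in D \ C, π x y t :=
      setIntegral_ge_of_const_le_real hSmeas hSfin
        (fun y hy => hlow y hy.1) (hint.mono_set Set.diff_subset)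
    have : 0 < δ * (volume (D \ C)).toReal :=
      mul_pos hδpos (ENNReal.toReal_pos hSvol.ne' hSfin)
    linarith
  have hDC : D = C := by
    apply Set.Subset.antisymm _ hCsub
    intro y hy
    by_contra hyC
    have : y ∈ D \ C := ⟨hy, hyC⟩
    rw [hSempty] at this
    exact this
  rw [hDC]
  exact isConnected_connectedComponentIn_iff.mpr hx
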